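/- Let M be a finite set of items, let V be an additive valuation on subsets of M given by a nonnegative weight function, let n and t be integers with 1 ≤ t ≤ n − 1, and let b_1, b_2, …, b_{2t} be 2t distinct items of M such that V({b_{2a−1}, b_{2a}}) ≤ MMS_V^n(M) for every a ∈ {1, …, t}. Then MMS_V^{n−t}(M \ {b_1, …, b_{2t}}) ≥ MMS_V^n(M). (This is the key claim proved inside Lemmas 'remove2' and 'remove3': removing t pairs of items, each of total value at most the maximin share, together with t agents does not decrease the remaining maximin share.) -/

import Mathlib

/-- `A` is a partition of the finite set `M` into `r` pairwise disjoint
(possibly empty) bundles whose union is `M`. -/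
def IsPartition {ι : Type*} [DecidableEq ι] {r : ℕ} (M : Finset ι) (A : Fin r → Finset ι) : Prop :=
  (∀ i j, i ≠ j → Disjoint (A i) (A j)) ∧ Finset.univ.biUnion A = M

/-- The maximin share `MMS_f^r(M)`. -/
noncomputable def MMS {ι : Type*} [DecidableEq ι] (M : Finset ι) (f : Finset ι → ℝ) (r : ℕ) : ℝ :=
  sSup { x : ℝ | ∃ A : Fin r → Finset ι, IsPartition M A ∧ x = ⨅ j, f (A j) }

/-- A valuation is additive if it is given by a nonnegative weight function. -/
def IsAdditive {ι : Type*} (V : Finset ι → ℝ) : Prop :=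
  ∃ w : ι → ℝ, (∀ b, 0 ≤ w b) ∧ ∀ S : Finset ι, V S = ∑ b ∈ S, w b

section
variable {ι : Type*} [DecidableEq ι]

lemma subset_of_partition {M : Finset ι} {r : ℕ} {A : Fin r → Finset ι}
    (hA : IsPartition M A) (l : Fin r) : A l ⊆ M := by
  rw [← hA.2]; exact Finset.subset_biUnion_of_mem A (Finset.mem_univ l)

lemma partition_cast {M : Finset ι} {N N' : ℕ} (h : N' = N) {A : Fin N → Finset ι}
    (hA : IsPartition M A) : IsPartition M (A ∘ Fin.cast h) := by
  subst h; exact hA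

lemma step_lemma {w : ι → ℝ} (hw : ∀ z, 0 ≤ w z) {μ : ℝ} {M : Finset ι} {r : ℕ}
    {A : Fin (r + 2) → Finset ι} (hA : IsPartition M A)
    (hge : ∀ j, μ ≤ ∑ z ∈ A j, w z)
    {x y : ι} (hxy : x ≠ y) (hx : x ∈ M) (hy : y ∈ M)
    (hpair : w x + w y ≤ μ) :
    ∃ B : Fin (r + 1) → Finset ι,
      IsPartition (M \ {x, y}) B ∧ ∀ p, μ ≤ ∑ z ∈ B p, w z := by
  classical
  obtain ⟨i, -, hxi⟩ := Finset.mem_biUnion.1 (hA.2 ▸ hx)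
  obtain ⟨j, -, hyj⟩ := Finset.mem_biUnion.1 (hA.2 ▸ hy)
  set k : Fin (r + 2) := if i = j then (if j = 0 then 1 else 0) else i with hk
  have h10 : (1 : Fin (r + 2)) ≠ 0 := by simp [Fin.ext_iff]
  have hkj : k ≠ j := by
    rw [hk]; split_ifs with h1 h2
    · exact h2 ▸ h10
    · exact fun h => h2 h.symm
    · exact h1
  have hine : i = j ∨ i = k := by
    rw [hk]; split_ifs with h1 h2
    · exact Or.inl h1
    · exact Or.inl h1
    · exact Or.inr rfl
  have hxk : ∀ l, l ≠ j → l ≠ k → x ∉ A l := by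
    intro l h1 h2 hl
    have hli : l ≠ i := by
      rcases hine with h | h
      · exact fun he => h1 (he.trans h)
      · exact fun he => h2 (he.trans h)
    exact (Finset.disjoint_left.1 (hA.1 l i hli)) hl hxi
  have hyk : ∀ l, l ≠ j → y ∉ A l := fun l h1 hl =>
    (Finset.disjoint_left.1 (hA.1 l j h1)) hl hyj
  have hxin : x ∈ A k ∪ A j := by
    rcases hine with h | h
    · exact Finset.mem_union_right _ (h ▸ hxi)
    · exact Finset.mem_union_left _ (h ▸ hxi)
  have hyin : y ∈ A k ∪ A j := Finset.mem_union_right _ hyj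
  refine ⟨fun p => (if j.succAbove p = k then A k ∪ A j else A (j.succAbove p)) \ {x, y},
    ⟨?_, ?_⟩, ?_⟩
  · intro p q hpq
    have hP := Fin.succAbove_ne j p
    have hQ := Fin.succAbove_ne j q
    have hPQ : j.succAbove p ≠ j.succAbove q := fun h => hpq (Fin.succAbove_right_injective h)
    by_cases hPk : j.succAbove p = k <;> by_cases hQk : j.succAbove q = k <;> dsimp only
    · exact absurd (hPk.trans hQk.symm) hPQ
    · rw [if_pos hPk, if_neg hQk]
      refine Disjoint.mono Finset.sdiff_subset Finset.sdiff_subset ?_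
      exact Finset.disjoint_union_left.2
        ⟨hA.1 k _ (fun h => hQk h.symm), hA.1 j _ (fun h => hQ h.symm)⟩
    · rw [if_neg hPk, if_pos hQk]
      refine Disjoint.mono Finset.sdiff_subset Finset.sdiff_subset ?_
      exact Finset.disjoint_union_right.2 ⟨hA.1 _ k hPk, hA.1 _ j hP⟩
    · rw [if_neg hPk, if_neg hQk]
      exact Disjoint.mono Finset.sdiff_subset Finset.sdiff_subset (hA.1 _ _ hPQ)
  · ext z
    simp only [Finset.mem_biUnion, Finset.mem_univ, true_and]
    constructor
    · rintro ⟨p, hz⟩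
      refine Finset.mem_sdiff.2 ⟨?_, (Finset.mem_sdiff.1 hz).2⟩
      have hz1 := (Finset.mem_sdiff.1 hz).1
      split_ifs at hz1 with h
      · rcases Finset.mem_union.1 hz1 with h' | h'
        · exact subset_of_partition hA k h'
        · exact subset_of_partition hA j h'
      · exact subset_of_partition hA _ hz1
    · intro hz
      obtain ⟨hzM, hzxy⟩ := Finset.mem_sdiff.1 hz
      obtain ⟨l₀, -, hl₀⟩ := Finset.mem_biUnion.1 (hA.2 ▸ hzM)
      by_cases h : l₀ = j
      · obtain ⟨p, hp⟩ := Fin.exists_succAbove_eq hkj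
        refine ⟨p, Finset.mem_sdiff.2 ⟨?_, hzxy⟩⟩
        rw [if_pos hp]
        exact Finset.mem_union_right _ (h ▸ hl₀)
      · obtain ⟨p, hp⟩ := Fin.exists_succAbove_eq h
        refine ⟨p, Finset.mem_sdiff.2 ⟨?_, hzxy⟩⟩
        rw [hp]
        by_cases h2 : l₀ = k
        · rw [if_pos h2]
          exact Finset.mem_union_left _ (h2 ▸ hl₀)
        · rw [if_neg h2]
          exact hl₀
  · intro p
    have hP := Fin.succAbove_ne j p
    by_cases hPk : j.succAbove p = k <;> dsimp only
    · rw [if_pos hPk]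
      have hsube : ({x, y} : Finset ι) ⊆ A k ∪ A j := by
        intro z hz
        rcases Finset.mem_insert.1 hz with rfl | hz
        · exact hxin
        · exact (Finset.mem_singleton.1 hz) ▸ hyin
      rw [Finset.sum_sdiff_eq_sub hsube, Finset.sum_union (hA.1 k j hkj),
        Finset.sum_pair hxy]
      rcases hine with hij | hik
      · have h3 : w x + w y ≤ ∑ z ∈ A j, w z := by
          have hsub2 : ({x, y} : Finset ι) ⊆ A j := by
            intro z hz
            rcases Finset.mem_insert.1 hz with rfl | hz
            · exact hij ▸ hxi
            · exact (Finset.mem_singleton.1 hz) ▸ hyj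
          calc w x + w y = ∑ z ∈ ({x, y} : Finset ι), w z := (Finset.sum_pair hxy).symm
            _ ≤ _ := Finset.sum_le_sum_of_subset_of_nonneg hsub2 fun _ _ _ => hw _
        linarith [hge k]
      · linarith [hge k, hge j]
    · rw [if_neg hPk]
      have hxn := hxk _ hP hPk
      have hyn := hyk _ hP
      have heq : A (j.succAbove p) \ {x, y} = A (j.succAbove p) := by
        ext z
        simp only [Finset.mem_sdiff, Finset.mem_insert, Finset.mem_singleton]
        refine ⟨fun h => h.1, fun h => ⟨h, ?_⟩⟩
        rintro (rfl | rfl)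
        · exact hxn h
        · exact hyn h
      rw [heq]
      exact hge _

end

lemma main_lemma {ι : Type*} [DecidableEq ι] {w : ι → ℝ} (hw : ∀ z, 0 ≤ w z) (μ : ℝ) :
    ∀ (t : ℕ) (M : Finset ι) (b c : Fin t → ι) (N : ℕ) (A : Fin N → Finset ι),
      t < N →
      Function.Injective (Sum.elim b c) →
      (∀ a, b a ∈ M) → (∀ a, c a ∈ M) →
      (∀ a, w (b a) + w (c a) ≤ μ) →
      IsPartition M A → (∀ j, μ ≤ ∑ z ∈ A j, w z) →
      ∃ B : Fin (N - t) → Finset ι,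
        IsPartition (M \ (Finset.univ.image b ∪ Finset.univ.image c)) B ∧
          ∀ j, μ ≤ ∑ z ∈ B j, w z := by
  intro t
  induction t with
  | zero =>
    intro M b c N A _ _ _ _ _ hA hge
    refine ⟨A, ?_, hge⟩
    simpa using hA
  | succ t ih =>
    intro M b c N A hN hinj hbM hcM hpairs hA hge
    obtain ⟨r, rfl⟩ : ∃ r, N = r + 2 := ⟨N - 2, by omega⟩
    have hbne : ∀ (u v : Fin (t + 1) ⊕ Fin (t + 1)), u ≠ v →
        Sum.elim b c u ≠ Sum.elim b c v := fun u v huv h => huv (hinj h)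
    have hxy : b (Fin.last t) ≠ c (Fin.last t) :=
      hbne (.inl (Fin.last t)) (.inr (Fin.last t)) (by simp)
    obtain ⟨B1, hB1, hB1ge⟩ := step_lemma hw hA hge hxy (hbM _) (hcM _) (hpairs _)
    set b' : Fin t → ι := fun a => b a.castSucc with hb'
    set c' : Fin t → ι := fun a => c a.castSucc with hc'
    have helim : Sum.elim b' c' = Sum.elim b c ∘ Sum.map Fin.castSucc Fin.castSucc := by
      funext u; cases u <;> rfl
    have hinj' : Function.Injective (Sum.elim b' c') := by
      rw [helim]
      exact hinj.comp ((Fin.castSucc_injective t).sumMap (Fin.castSucc_injective t))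
    have hbM' : ∀ a, b' a ∈ M \ {b (Fin.last t), c (Fin.last t)} := by
      intro a
      rw [Finset.mem_sdiff]
      refine ⟨hbM _, ?_⟩
      simp only [Finset.mem_insert, Finset.mem_singleton]
      push_neg
      refine ⟨?_, ?_⟩
      · exact hbne (.inl a.castSucc) (.inl (Fin.last t))
          (by simp [(Fin.castSucc_lt_last a).ne])
      · exact hbne (.inl a.castSucc) (.inr (Fin.last t)) (by simp)
    have hcM' : ∀ a, c' a ∈ M \ {b (Fin.last t), c (Fin.last t)} := by
      intro a
      rw [Finset.mem_sdiff]
      refine ⟨hcM _, ?_⟩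
      simp only [Finset.mem_insert, Finset.mem_singleton]
      push_neg
      refine ⟨?_, ?_⟩
      · exact hbne (.inr a.castSucc) (.inl (Fin.last t)) (by simp)
      · exact hbne (.inr a.castSucc) (.inr (Fin.last t))
          (by simp [(Fin.castSucc_lt_last a).ne])
    obtain ⟨B, hB, hBge⟩ := ih (M \ {b (Fin.last t), c (Fin.last t)}) b' c' (r + 1) B1
      (by omega) hinj' hbM' hcM' (fun a => hpairs a.castSucc) hB1 hB1ge
    have himb : Finset.univ.image b = insert (b (Fin.last t)) (Finset.univ.image b') := by
      ext z
      simp only [Finset.mem_image, Finset.mem_insert, Finset.mem_univ, true_and, hb']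
      constructor
      · rintro ⟨a, rfl⟩
        rcases Fin.eq_castSucc_or_eq_last a with ⟨a', rfl⟩ | rfl
        · exact Or.inr ⟨a', rfl⟩
        · exact Or.inl rfl
      · rintro (rfl | ⟨a, rfl⟩)
        · exact ⟨Fin.last t, rfl⟩
        · exact ⟨a.castSucc, rfl⟩
    have himc : Finset.univ.image c = insert (c (Fin.last t)) (Finset.univ.image c') := by
      ext z
      simp only [Finset.mem_image, Finset.mem_insert, Finset.mem_univ, true_and, hc']
      constructor
      · rintro ⟨a, rfl⟩
        rcases Fin.eq_castSucc_or_eq_last a with ⟨a', rfl⟩ | rfl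
        · exact Or.inr ⟨a', rfl⟩
        · exact Or.inl rfl
      · rintro (rfl | ⟨a, rfl⟩)
        · exact ⟨Fin.last t, rfl⟩
        · exact ⟨a.castSucc, rfl⟩
    have hset : (M \ {b (Fin.last t), c (Fin.last t)}) \
        (Finset.univ.image b' ∪ Finset.univ.image c')
        = M \ (Finset.univ.image b ∪ Finset.univ.image c) := by
      rw [himb, himc]
      ext z
      simp only [Finset.mem_sdiff, Finset.mem_union, Finset.mem_insert, Finset.mem_singleton]
      tauto
    rw [hset] at hB
    have hsz : r + 2 - (t + 1) = r + 1 - t := by omega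
    exact ⟨B ∘ Fin.cast hsz, partition_cast hsz hB, fun j => hBge _⟩

/-- Removing `t` pairs of distinct items `{b a, c a}` (`a = 1, …, t`), each pair of total
value at most the maximin share, together with `t` agents does not decrease the maximin
share of an additive valuation. -/
theorem MMS_remove_pairs {ι : Type*} [Fintype ι] [DecidableEq ι]
    (V : Finset ι → ℝ) (hV : IsAdditive V)
    {n t : ℕ} (ht1 : 1 ≤ t) (ht2 : t + 1 ≤ n)
    (b c : Fin t → ι)
    (hinj : Function.Injective (Sum.elim b c : Fin t ⊕ Fin t → ι))
    (hpairs : ∀ a : Fin t, V {b a, c a} ≤ MMS Finset.univ V n) :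
    MMS Finset.univ V n ≤
      MMS (Finset.univ \ (Finset.univ.image b ∪ Finset.univ.image c)) V (n - t) := by
  obtain ⟨w, hw, hVw⟩ := hV
  obtain ⟨m, rfl⟩ : ∃ m, n = m + t + 1 := ⟨n - t - 1, by omega⟩
  -- the MMS value is attained by some partition
  have hfin : ∀ (M : Finset ι) (r : ℕ),
      {x : ℝ | ∃ A : Fin r → Finset ι, IsPartition M A ∧ x = ⨅ j, V (A j)}.Finite := by
    intro M r
    have hsub : {x : ℝ | ∃ A : Fin r → Finset ι, IsPartition M A ∧ x = ⨅ j, V (A j)}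
        ⊆ (fun A : Fin r → Finset ι => ⨅ j, V (A j)) '' Set.univ := by
      rintro xx ⟨A, hA, rfl⟩
      exact ⟨A, trivial, rfl⟩
    exact (Set.finite_univ.image _).subset hsub
  have hne : {x : ℝ | ∃ A : Fin (m + t + 1) → Finset ι,
      IsPartition (Finset.univ : Finset ι) A ∧ x = ⨅ j, V (A j)}.Nonempty := by
    refine ⟨_, ⟨fun j : Fin (m + t + 1) => if j = 0 then (Finset.univ : Finset ι) else ∅,
      ⟨?_, ?_⟩, rfl⟩⟩
    · intro i j hij
      dsimp only
      split_ifs with h1 h2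
      · exact absurd (h1.trans h2.symm) hij
      · simp
      · simp
      · simp
    · refine Finset.Subset.antisymm (Finset.subset_univ _) fun z _ => ?_
      exact Finset.mem_biUnion.2 ⟨0, Finset.mem_univ _, by simp⟩
  have hmem : MMS (Finset.univ : Finset ι) V (m + t + 1) ∈
      {x : ℝ | ∃ A : Fin (m + t + 1) → Finset ι,
        IsPartition (Finset.univ : Finset ι) A ∧ x = ⨅ j, V (A j)} :=
    hne.csSup_mem (hfin _ _)
  obtain ⟨A, hA, hAval⟩ := hmem
  have hge : ∀ j, MMS (Finset.univ : Finset ι) V (m + t + 1) ≤ ∑ z ∈ A j, w z := by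
    intro j
    rw [← hVw]
    calc MMS (Finset.univ : Finset ι) V (m + t + 1) = ⨅ j, V (A j) := hAval
      _ ≤ V (A j) := ciInf_le (Set.Finite.bddBelow (Set.finite_range _)) j
  have hpairs' : ∀ a, w (b a) + w (c a) ≤ MMS (Finset.univ : Finset ι) V (m + t + 1) := by
    intro a
    have hne' : b a ≠ c a := fun h => by
      simpa using hinj (show Sum.elim b c (.inl a) = Sum.elim b c (.inr a) from h)
    have h1 := hpairs a
    rwa [hVw, Finset.sum_pair hne'] at h1
  obtain ⟨B, hB, hBge⟩ := main_lemma hw (MMS (Finset.univ : Finset ι) V (m + t + 1)) t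
    Finset.univ b c (m + t + 1) A (by omega) hinj (fun _ => Finset.mem_univ _)
    (fun _ => Finset.mem_univ _) hpairs' hA hge
  haveI : Nonempty (Fin (m + t + 1 - t)) := ⟨⟨0, by omega⟩⟩
  refine le_trans ?_ (le_csSup (Set.Finite.bddAbove (hfin _ _)) ⟨B, hB, rfl⟩)
  refine le_ciInf fun j => ?_
  rw [hVw]
  exact hBge j
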